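/- Consider a hierarchical model with joint density p(y, θ) = p(θ_G) ∏_{i=1}^n p(b_i|θ_G) p(y_i|b_i, θ_G), reparametrized via b_i = L_i b̃_i + λ_i, where for each i, λ_i(θ_G) ∈ ℝ^r and the r × r lower-triangular positive-diagonal matrix L_i(θ_G) are differentiable in θ_G, and Λ_i = L_i L_i^T. Let ℓ(θ̃) = log p(θ_G) + Σ_{i=1}^n { log p(y_i, b_i|θ_G) + log|L_i| }, a_i = ∇_{b_i} log p(y_i, b_i|θ_G), B_i = L_i^T a_i b̃_i^T, and B̃_i = B̄_i + B̄_i^T − dg(B_i). Suppose θ_G is partitioned as (θ_{G_1}, …, θ_{G_M}). Then for each m = 1, …, M, ∇_{θ_{G_m}} ℓ(θ̃) = Σ_{i=1}^n (∇_{θ_{G_m}} λ_i) a_i + (1/2) Σ_{i=1}^n {∇_{θ_{G_m}} vec(Λ_i)} vec(Λ_i^{−1} + L_i^{−T} B̃_i L_i^{−1}) + Σ_{i=1}^n ∇_{θ_{G_m}} log p(y_i, b_i|θ_G) + ∇_{θ_{G_m}} log p(θ_G), where ∇_{θ_{G_m}} λ_i and ∇_{θ_{G_m}} vec(Λ_i)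 denote the (transposed) Jacobian matrices and the last two gradients are partial derivatives holding b_i fixed. -/

import Mathlib

open Matrix

attribute [local instance] Matrix.normedAddCommGroup Matrix.normedSpace

/-- The continuous linear map `v ↦ a ⬝ᵥ v`. -/
noncomputable def dotCLM {ι : Type*} [Fintype ι] (a : ι → ℝ) : (ι → ℝ) →L[ℝ] ℝ :=
  LinearMap.toContinuousLinearMap
    { toFun := fun v => a ⬝ᵥ v
      map_add' := fun x y => dotProduct_add a x y
      map_smul' := fun c x => by simp [dotProduct_smul] }

/-- The continuous linear map `v ↦ M *ᵥ v`. -/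
noncomputable def mulVecCLM {ι κ : Type*} [Fintype ι] [Fintype κ]
    (M : Matrix κ ι ℝ) : (ι → ℝ) →L[ℝ] (κ → ℝ) :=
  LinearMap.toContinuousLinearMap M.mulVecLin

/-- Column-stacking vectorization `vec(A)`, indexed by pairs `(column, row)`. -/
def vecm {r : ℕ} (A : Matrix (Fin r) (Fin r) ℝ) : Fin r × Fin r → ℝ := fun q => A q.2 q.1

/-- Lower-triangular truncation `Ā` of a square matrix. -/
def ltri {r : ℕ} (A : Matrix (Fin r) (Fin r) ℝ) : Matrix (Fin r) (Fin r) ℝ :=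
  fun i j => if j ≤ i then A i j else 0

/- ### Auxiliary material -/

@[simp] lemma dotCLM_apply {ι : Type*} [Fintype ι] (a v : ι → ℝ) :
    dotCLM a v = a ⬝ᵥ v := rfl

@[simp] lemma mulVecCLM_apply {ι κ : Type*} [Fintype ι] [Fintype κ]
    (M : Matrix κ ι ℝ) (v : ι → ℝ) : mulVecCLM M v = M *ᵥ v := rfl

noncomputable def entryCLM {r : ℕ} (j k : Fin r) : Matrix (Fin r) (Fin r) ℝ →L[ℝ] ℝ :=
  LinearMap.toContinuousLinearMap
    { toFun := fun A => A j k
      map_add' := fun _ _ => rfl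
      map_smul' := fun _ _ => rfl }

noncomputable def mvCLM {r : ℕ} (b : Fin r → ℝ) : Matrix (Fin r) (Fin r) ℝ →L[ℝ] (Fin r → ℝ) :=
  LinearMap.toContinuousLinearMap
    { toFun := fun A => A *ᵥ b
      map_add' := fun A A' => Matrix.add_mulVec A A' b
      map_smul' := fun c A => by simp [Matrix.smul_mulVec] }

@[simp] lemma entryCLM_apply {r : ℕ} (j k : Fin r) (A : Matrix (Fin r) (Fin r) ℝ) :
    (entryCLM j k) A = A j k := rfl

@[simp] lemma mvCLM_apply {r : ℕ} (b : Fin r → ℝ) (A : Matrix (Fin r) (Fin r) ℝ) :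
    mvCLM b A = A *ᵥ b := rfl

noncomputable def sandCLM {r gm : ℕ} (L0 : Matrix (Fin r) (Fin r) ℝ)
    (Φ : (Fin gm → ℝ) →L[ℝ] Matrix (Fin r) (Fin r) ℝ) :
    (Fin gm → ℝ) →L[ℝ] (Fin r × Fin r → ℝ) :=
  LinearMap.toContinuousLinearMap
    { toFun := fun v => vecm (Φ v * L0ᵀ + L0 * (Φ v)ᵀ)
      map_add' := fun v w => by
        funext q
        simp [vecm, Matrix.add_mul, Matrix.mul_add, Matrix.transpose_add, Matrix.add_apply]
        ring
      map_smul' := fun c v => by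
        funext q
        simp [vecm, Matrix.smul_mul, Matrix.mul_smul, Matrix.transpose_smul, Matrix.add_apply,
          Matrix.smul_apply]
        ring }

@[simp] lemma sandCLM_apply {r gm : ℕ} (L0 : Matrix (Fin r) (Fin r) ℝ)
    (Φ : (Fin gm → ℝ) →L[ℝ] Matrix (Fin r) (Fin r) ℝ) (v : Fin gm → ℝ) :
    sandCLM L0 Φ v = vecm (Φ v * L0ᵀ + L0 * (Φ v)ᵀ) := rfl

lemma hasFDerivAt_vecLLT {r gm : ℕ} (F : (Fin gm → ℝ) → Matrix (Fin r) (Fin r) ℝ)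
    (Φ : (Fin gm → ℝ) →L[ℝ] Matrix (Fin r) (Fin r) ℝ) (t0 : Fin gm → ℝ)
    (hF : HasFDerivAt F Φ t0) :
    HasFDerivAt (fun t => vecm (F t * (F t)ᵀ)) (sandCLM (F t0) Φ) t0 := by
  rw [hasFDerivAt_pi']
  intro q
  have hent : ∀ j k : Fin r, HasFDerivAt (fun t => F t j k) ((entryCLM j k).comp Φ) t0 :=
    fun j k => ((entryCLM j k).hasFDerivAt).comp t0 hF
  have h1 : HasFDerivAt (fun t => ∑ s, F t q.2 s * F t q.1 s)
      (∑ s : Fin r, (F t0 q.2 s • (entryCLM q.1 s).comp Φ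
        + F t0 q.1 s • (entryCLM q.2 s).comp Φ)) t0 :=
    HasFDerivAt.fun_sum fun s _ => (hent q.2 s).mul (hent q.1 s)
  have h2 : (fun t => vecm (F t * (F t)ᵀ) q) = fun t => ∑ s, F t q.2 s * F t q.1 s := by
    funext t
    simp [vecm, Matrix.mul_apply, Matrix.transpose_apply]
  have h3 : (∑ s : Fin r, (F t0 q.2 s • (entryCLM q.1 s).comp Φ
        + F t0 q.1 s • (entryCLM q.2 s).comp Φ))
      = (ContinuousLinearMap.proj q).comp (sandCLM (F t0) Φ) := by
    ext v
    simp [vecm, Matrix.mul_apply, Matrix.transpose_apply, Matrix.add_apply,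
      Finset.sum_add_distrib, mul_comm, add_comm]
  rw [h2, ← h3]
  exact h1

lemma vecm_dot {r : ℕ} (A X : Matrix (Fin r) (Fin r) ℝ) :
    vecm A ⬝ᵥ vecm X = Matrix.trace (Aᵀ * X) := by
  simp only [vecm, dotProduct, Matrix.trace, Matrix.diag, Matrix.mul_apply,
    Matrix.transpose_apply, Fintype.sum_prod_type]

lemma sum_dot {ι κ : Type*} [Fintype ι] (s : Finset κ) (f : κ → ι → ℝ) (v : ι → ℝ) :
    (∑ i ∈ s, f i) ⬝ᵥ v = ∑ i ∈ s, f i ⬝ᵥ v := by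
  simp only [dotProduct, Finset.sum_apply, Finset.sum_mul]
  exact Finset.sum_comm

lemma dotflip {ι κ : Type*} [Fintype ι] [Fintype κ] (A : Matrix ι κ ℝ)
    (x : κ → ℝ) (v : ι → ℝ) : (A *ᵥ x) ⬝ᵥ v = x ⬝ᵥ (Aᵀ *ᵥ v) := by
  simp only [dotProduct, Matrix.mulVec, Matrix.transpose_apply,
    Finset.sum_mul, Finset.mul_sum]
  rw [Finset.sum_comm]
  exact Finset.sum_congr rfl fun j _ => Finset.sum_congr rfl fun k _ => by ring

lemma key {r : ℕ} (L M : Matrix (Fin r) (Fin r) ℝ) (a b : Fin r → ℝ)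
    (hL : ∀ j k : Fin r, j < k → L j k = 0)
    (hM : ∀ j k : Fin r, j < k → M j k = 0)
    (hd : ∀ j, 0 < L j j) :
    vecm ((L * Lᵀ)⁻¹ + (L⁻¹)ᵀ * (ltri (vecMulVec (Lᵀ *ᵥ a) b) + (ltri (vecMulVec (Lᵀ *ᵥ a) b))ᵀ
        - Matrix.diagonal (fun j => vecMulVec (Lᵀ *ᵥ a) b j j)) * L⁻¹)
      ⬝ᵥ vecm (M * Lᵀ + L * Mᵀ)
    = 2 * (a ⬝ᵥ (M *ᵥ b) + ∑ j, (L j j)⁻¹ * M j j) := by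
  classical
  set Bm : Matrix (Fin r) (Fin r) ℝ := vecMulVec (Lᵀ *ᵥ a) b with hBm
  set Bt : Matrix (Fin r) (Fin r) ℝ :=
    ltri Bm + (ltri Bm)ᵀ - Matrix.diagonal (fun j => Bm j j) with hBt
  have hLtri : L.BlockTriangular OrderDual.toDual := fun j k h => hL j k (by simpa using h)
  have hdet : L.det = ∏ j, L j j := Matrix.det_of_lowerTriangular L hLtri
  have hdet0 : IsUnit L.det := by
    rw [hdet]
    exact (Finset.prod_pos (fun j _ => hd j)).ne'.isUnit
  haveI : Invertible L := L.invertibleOfIsUnitDet hdet0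
  have hKtri : (L⁻¹).BlockTriangular OrderDual.toDual :=
    Matrix.blockTriangular_inv_of_blockTriangular hLtri
  have hKlow : ∀ j k : Fin r, j < k → L⁻¹ j k = 0 := fun j k h => hKtri (by simpa using h)
  have hKL : L⁻¹ * L = 1 := Matrix.nonsing_inv_mul L hdet0
  have hLK : L * L⁻¹ = 1 := Matrix.mul_nonsing_inv L hdet0
  have hKdiag : ∀ j, L⁻¹ j j = (L j j)⁻¹ := by
    intro j
    have h1 : (L⁻¹ * L) j j = 1 := by rw [hKL]; simp
    rw [Matrix.mul_apply] at h1
    rw [Finset.sum_eq_single j] at h1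
    · exact eq_inv_of_mul_eq_one_left h1
    · intro k _ hk
      rcases lt_or_gt_of_ne hk with h | h
      · rw [hL k j h, mul_zero]
      · rw [hKlow j k h, zero_mul]
    · intro h; exact absurd (Finset.mem_univ j) h
  set K := L⁻¹ with hK
  set N : Matrix (Fin r) (Fin r) ℝ := K * M with hN
  have hNlow : ∀ j k : Fin r, j < k → N j k = 0 := by
    intro j k hjk
    rw [hN, Matrix.mul_apply]
    apply Finset.sum_eq_zero
    intro s _
    rcases le_or_gt s j with h | h
    · rw [hM s k (lt_of_le_of_lt h hjk), mul_zero]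
    · rw [hKlow j s h, zero_mul]
  have hBtsym : Btᵀ = Bt := by
    rw [hBt, Matrix.transpose_sub, Matrix.transpose_add, Matrix.transpose_transpose,
      Matrix.diagonal_transpose, add_comm (ltri Bm)ᵀ]
  have hCsym : ((L * Lᵀ)⁻¹ + Kᵀ * Bt * K)ᵀ = (L * Lᵀ)⁻¹ + Kᵀ * Bt * K := by
    rw [Matrix.transpose_add, Matrix.transpose_nonsing_inv, Matrix.transpose_mul,
      Matrix.transpose_mul, Matrix.transpose_transpose, Matrix.transpose_mul,
      Matrix.transpose_transpose, hBtsym, Matrix.mul_assoc]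
  rw [vecm_dot]
  have hY : L * Mᵀ = (M * Lᵀ)ᵀ := by
    rw [Matrix.transpose_mul, Matrix.transpose_transpose]
  rw [hY]
  have h5 : Matrix.trace (((L * Lᵀ)⁻¹ + Kᵀ * Bt * K)ᵀ * (M * Lᵀ + (M * Lᵀ)ᵀ))
      = 2 * Matrix.trace (((L * Lᵀ)⁻¹ + Kᵀ * Bt * K) * (M * Lᵀ)) := by
    rw [hCsym, Matrix.mul_add, Matrix.trace_add]
    have h6 : Matrix.trace (((L * Lᵀ)⁻¹ + Kᵀ * Bt * K) * (M * Lᵀ)ᵀ)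
        = Matrix.trace (((L * Lᵀ)⁻¹ + Kᵀ * Bt * K) * (M * Lᵀ)) := by
      rw [← Matrix.trace_transpose (((L * Lᵀ)⁻¹ + Kᵀ * Bt * K) * (M * Lᵀ)ᵀ),
        Matrix.transpose_mul, Matrix.transpose_transpose, Matrix.trace_mul_comm, hCsym]
    rw [h6]; ring
  rw [h5]
  have h7 : Matrix.trace (((L * Lᵀ)⁻¹ + Kᵀ * Bt * K) * (M * Lᵀ))
      = Matrix.trace ((Lᵀ * ((L * Lᵀ)⁻¹ + Kᵀ * Bt * K)) * M) := by
    rw [← Matrix.mul_assoc, Matrix.trace_mul_comm]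
    simp [Matrix.mul_assoc]
  rw [h7]
  have hdetT : IsUnit (Lᵀ).det := by rwa [Matrix.det_transpose]
  have hLtC : Lᵀ * ((L * Lᵀ)⁻¹ + Kᵀ * Bt * K) = K + Bt * K := by
    rw [Matrix.mul_add]
    have e1 : Lᵀ * (L * Lᵀ)⁻¹ = K := by
      rw [Matrix.mul_inv_rev, ← Matrix.mul_assoc, Matrix.mul_nonsing_inv _ hdetT,
        Matrix.one_mul]
    have e2 : Lᵀ * (Kᵀ * Bt * K) = Bt * K := by
      have hLK' : Lᵀ * Kᵀ = 1 := by
        rw [← Matrix.transpose_mul, hKL, Matrix.transpose_one]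
      rw [← Matrix.mul_assoc, ← Matrix.mul_assoc, hLK', Matrix.one_mul]
    rw [e1, e2]
  rw [hLtC, Matrix.add_mul, Matrix.trace_add, Matrix.mul_assoc, ← hN]
  -- trace (K * M)
  have htrKM : Matrix.trace (K * M) = ∑ j, (L j j)⁻¹ * M j j := by
    simp only [Matrix.trace, Matrix.diag, Matrix.mul_apply]
    apply Finset.sum_congr rfl
    intro j _
    rw [Finset.sum_eq_single j]
    · rw [hKdiag]
    · intro k _ hk
      rcases lt_or_gt_of_ne hk with h | h
      · rw [hM k j h, mul_zero]
      · rw [hKlow j k h, zero_mul]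
    · intro h; exact absurd (Finset.mem_univ j) h
  -- trace (Bt * N)
  have htrBt : Matrix.trace (Bt * N) = a ⬝ᵥ (M *ᵥ b) := by
    have hexp : Matrix.trace (Bt * N) = ∑ j, ∑ k, Bt j k * N k j := by
      simp only [Matrix.trace, Matrix.diag, Matrix.mul_apply]
    rw [hexp]
    have hstep2 : (∑ j, ∑ k, Bt j k * N k j) = ∑ j, ∑ k, Bm k j * N k j := by
      apply Finset.sum_congr rfl; intro j _
      apply Finset.sum_congr rfl; intro k _
      rcases lt_trichotomy j k with h | h | h
      · have hBtjk : Bt j k = Bm k j := by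
          rw [hBt]
          simp only [Matrix.sub_apply, Matrix.add_apply, Matrix.transpose_apply, ltri,
            Matrix.diagonal_apply_ne _ (ne_of_lt h)]
          rw [if_neg (not_le.mpr h), if_pos (le_of_lt h)]
          ring
        rw [hBtjk]
      · subst h
        have hBtjj : Bt j j = Bm j j := by
          rw [hBt]
          simp only [Matrix.sub_apply, Matrix.add_apply, Matrix.transpose_apply, ltri,
            Matrix.diagonal_apply_eq, if_pos (le_refl j)]
          ring
        rw [hBtjj]
      · rw [hNlow k j h, mul_zero, mul_zero]
    rw [hstep2]
    have hstep3 : (∑ j, ∑ k, Bm k j * N k j) = (Lᵀ *ᵥ a) ⬝ᵥ (N *ᵥ b) := by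
      simp only [hBm, Matrix.vecMulVec_apply, dotProduct, Matrix.mulVec,
        dotProduct, Finset.mul_sum]
      rw [Finset.sum_comm]
      apply Finset.sum_congr rfl; intro k _
      apply Finset.sum_congr rfl; intro j _
      ring
    rw [hstep3]
    have hfin : a ⬝ᵥ (M *ᵥ b) = Lᵀ *ᵥ a ⬝ᵥ N *ᵥ b := by
      rw [Matrix.mulVec_transpose, ← Matrix.dotProduct_mulVec, Matrix.mulVec_mulVec,
        hN, ← Matrix.mul_assoc, hLK, Matrix.one_mul]
    exact hfin.symm
  rw [htrKM, htrBt]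
  ring

/-- **Gradient of the reparametrized log joint density with respect to a block `θ_{G_m}`
of the global variables (Theorem 2).** Here `t` ranges over the block `θ_{G_m} ∈ ℝ^{gm}`
(all other blocks held fixed), `logprior t = log p(θ_G)`, `logp i t b = log p(y_i, b|θ_G)`,
`b_i = L_i b̃_i + λ_i`, `Λ_i = L_i L_iᵀ`, and `ℓ` is the reparametrized log joint density.
`Dlam i = ∇_{θ_{G_m}} λ_i` and `DvecLam i = ∇_{θ_{G_m}} vec(Λ_i)` are transposed Jacobians,
`a_i = ∇_{b_i} log p(y_i, b_i|θ_G)`, `Dθ i = ∇_{θ_{G_m}} log p(y_i, b_i|θ_G)` (with `b_i`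
fixed), `gp = ∇_{θ_{G_m}} log p(θ_G)`, `B_i = L_iᵀ a_i b̃_iᵀ`, `B̃_i = B̄_i + B̄_iᵀ − dg(B_i)`.
Then `∇_{θ_{G_m}} ℓ = Σᵢ (∇λ_i) a_i + (1/2) Σᵢ (∇vec Λ_i) vec(Λ_i⁻¹ + L_i⁻ᵀ B̃_i L_i⁻¹)
+ Σᵢ ∇_{θ_{G_m}} log p(y_i, b_i|θ_G) + ∇_{θ_{G_m}} log p(θ_G)`. -/
theorem gradient_reparametrized_log_joint_global
    (n r gm : ℕ)
    (logprior : (Fin gm → ℝ) → ℝ)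
    (logp : Fin n → (Fin gm → ℝ) → (Fin r → ℝ) → ℝ)
    (Lmat : (Fin gm → ℝ) → Fin n → Matrix (Fin r) (Fin r) ℝ)
    (lam : (Fin gm → ℝ) → Fin n → Fin r → ℝ)
    (Lam : (Fin gm → ℝ) → Fin n → Matrix (Fin r) (Fin r) ℝ)
    (hLlow : ∀ t i, ∀ j k : Fin r, j < k → Lmat t i j k = 0)
    (hLdiag : ∀ t i, ∀ j : Fin r, 0 < Lmat t i j j)
    (hLam : ∀ t i, Lam t i = Lmat t i * (Lmat t i)ᵀ)
    (btil : Fin n → Fin r → ℝ)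
    (t0 : Fin gm → ℝ)
    (b0 : Fin n → Fin r → ℝ)
    (hb0 : ∀ i, b0 i = Lmat t0 i *ᵥ btil i + lam t0 i)
    (hLdiff : ∀ i, DifferentiableAt ℝ (fun t => Lmat t i) t0)
    (Dlam : Fin n → Matrix (Fin gm) (Fin r) ℝ)
    (hlamD : ∀ i, HasFDerivAt (fun t => lam t i) (mulVecCLM (Dlam i)ᵀ) t0)
    (DvecLam : Fin n → Matrix (Fin gm) (Fin r × Fin r) ℝ)
    (hLamD : ∀ i, HasFDerivAt (fun t => vecm (Lam t i)) (mulVecCLM (DvecLam i)ᵀ) t0)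
    (a : Fin n → Fin r → ℝ) (Dθ : Fin n → Fin gm → ℝ)
    (hlogp : ∀ i, HasFDerivAt
      (fun q : (Fin gm → ℝ) × (Fin r → ℝ) => logp i q.1 q.2)
      ((dotCLM (Dθ i)).comp (ContinuousLinearMap.fst ℝ (Fin gm → ℝ) (Fin r → ℝ))
        + (dotCLM (a i)).comp (ContinuousLinearMap.snd ℝ (Fin gm → ℝ) (Fin r → ℝ)))
      (t0, b0 i))
    (gp : Fin gm → ℝ)
    (hprior : HasFDerivAt logprior (dotCLM gp) t0)
    (B Btil : Fin n → Matrix (Fin r) (Fin r) ℝ)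
    (hB : ∀ i, B i = Matrix.vecMulVec ((Lmat t0 i)ᵀ *ᵥ a i) (btil i))
    (hBtil : ∀ i, Btil i = ltri (B i) + (ltri (B i))ᵀ
      - Matrix.diagonal (fun j => B i j j)) :
    HasFDerivAt
      (fun t : Fin gm → ℝ => logprior t
        + ∑ i, (logp i t (Lmat t i *ᵥ btil i + lam t i) + Real.log |(Lmat t i).det|))
      (dotCLM ((∑ i, Dlam i *ᵥ a i)
        + (1 / 2 : ℝ) • (∑ i, DvecLam i *ᵥ
            vecm ((Lam t0 i)⁻¹ + ((Lmat t0 i)⁻¹)ᵀ * Btil i * (Lmat t0 i)⁻¹))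
        + (∑ i, Dθ i) + gp))
      t0 := by
  classical
  have hΦ : ∀ i, HasFDerivAt (fun t => Lmat t i) (fderiv ℝ (fun t => Lmat t i) t0) t0 :=
    fun i => (hLdiff i).hasFDerivAt
  set Φ : Fin n → (Fin gm → ℝ) →L[ℝ] Matrix (Fin r) (Fin r) ℝ :=
    fun i => fderiv ℝ (fun t => Lmat t i) t0 with hΦdef
  have hΦlow : ∀ i (v : Fin gm → ℝ) (j k : Fin r), j < k → Φ i v j k = 0 := by
    intro i v j k hjk
    have h1 : HasFDerivAt (fun t => Lmat t i j k) ((entryCLM j k).comp (Φ i)) t0 :=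
      ((entryCLM j k).hasFDerivAt).comp t0 (hΦ i)
    have h2 : (fun t => Lmat t i j k) = fun _ => (0 : ℝ) :=
      funext fun t => hLlow t i j k hjk
    rw [h2] at h1
    have h3 := h1.unique (hasFDerivAt_const (0:ℝ) t0)
    have h4 := congrArg (fun (C : (Fin gm → ℝ) →L[ℝ] ℝ) => C v) h3
    simpa using h4
  have hsand : ∀ i (v : Fin gm → ℝ),
      (DvecLam i)ᵀ *ᵥ v
        = vecm (Φ i v * (Lmat t0 i)ᵀ + Lmat t0 i * (Φ i v)ᵀ) := by
    intro i v
    have h1 := hasFDerivAt_vecLLT (fun t => Lmat t i) (Φ i) t0 (hΦ i)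
    have h2 : (fun t => vecm (Lam t i)) = fun t => vecm (Lmat t i * (Lmat t i)ᵀ) :=
      funext fun t => by rw [hLam]
    have h3 := hLamD i
    rw [h2] at h3
    have h4 := h3.unique h1
    have h5 := congrArg (fun (C : (Fin gm → ℝ) →L[ℝ] (Fin r × Fin r → ℝ)) => C v) h4
    simpa [mulVecCLM, Matrix.mulVecLin_apply, Matrix.mulVec_transpose] using h5
  have hmv : ∀ i, HasFDerivAt (fun t => Lmat t i *ᵥ btil i)
      ((mvCLM (btil i)).comp (Φ i)) t0 := by
    intro i
    have h := ((mvCLM (btil i)).hasFDerivAt).comp t0 (hΦ i)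
    exact h
  have hinner : ∀ i, HasFDerivAt (fun t => (t, Lmat t i *ᵥ btil i + lam t i))
      ((ContinuousLinearMap.id ℝ (Fin gm → ℝ)).prod
        ((mvCLM (btil i)).comp (Φ i) + mulVecCLM (Dlam i)ᵀ)) t0 :=
    fun i => HasFDerivAt.prodMk (hasFDerivAt_id t0) ((hmv i).add (hlamD i))
  have hlogp' : ∀ i, HasFDerivAt
      (fun q : (Fin gm → ℝ) × (Fin r → ℝ) => logp i q.1 q.2)
      ((dotCLM (Dθ i)).comp (ContinuousLinearMap.fst ℝ (Fin gm → ℝ) (Fin r → ℝ))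
        + (dotCLM (a i)).comp (ContinuousLinearMap.snd ℝ (Fin gm → ℝ) (Fin r → ℝ)))
      (t0, Lmat t0 i *ᵥ btil i + lam t0 i) := by
    intro i
    have h := hlogp i
    rwa [hb0 i] at h
  have hgi := fun i => (hlogp' i).comp t0 (hinner i)
  have hdetlog : ∀ i, HasFDerivAt (fun t => Real.log |(Lmat t i).det|)
      (∑ j, (Lmat t0 i j j)⁻¹ • ((entryCLM j j).comp (Φ i))) t0 := by
    intro i
    have hfun : (fun t => Real.log |(Lmat t i).det|)
        = fun t => ∑ j, Real.log (Lmat t i j j) := by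
      funext t
      have hdet : (Lmat t i).det = ∏ j, Lmat t i j j :=
        Matrix.det_of_lowerTriangular _ (fun j k h => hLlow t i j k (by simpa using h))
      rw [hdet, abs_of_pos (Finset.prod_pos fun j _ => hLdiag t i j),
        Real.log_prod (fun j _ => (hLdiag t i j).ne')]
    rw [hfun]
    refine HasFDerivAt.fun_sum fun j _ => ?_
    have hent : HasFDerivAt (fun t => Lmat t i j j) ((entryCLM j j).comp (Φ i)) t0 :=
      ((entryCLM j j).hasFDerivAt).comp t0 (hΦ i)
    exact hent.log (hLdiag t0 i j).ne'
  have htotal := hprior.fun_add (HasFDerivAt.fun_sum fun (i : Fin n) (_ : i ∈ Finset.univ) =>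
    (hgi i).add (hdetlog i))
  refine htotal.congr_fderiv ?_
  ext v
  have hper : ∀ i, (Dlam i *ᵥ a i) ⬝ᵥ v
      + (1/2 : ℝ) * ((DvecLam i *ᵥ vecm ((Lam t0 i)⁻¹
          + ((Lmat t0 i)⁻¹)ᵀ * Btil i * (Lmat t0 i)⁻¹)) ⬝ᵥ v)
      = a i ⬝ᵥ (Φ i v *ᵥ btil i + (Dlam i)ᵀ *ᵥ v)
        + ∑ j, (Lmat t0 i j j)⁻¹ * (Φ i v j j) := by
    intro i
    rw [dotflip, dotflip, hsand i v, hLam t0 i, hBtil i, hB i,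
      key (Lmat t0 i) (Φ i v) (a i) (btil i) (hLlow t0 i)
        (fun j k h => hΦlow i v j k h) (hLdiag t0 i),
      dotProduct_add]
    ring
  simp only [ContinuousLinearMap.add_apply, ContinuousLinearMap.coe_sum',
    Finset.sum_apply, ContinuousLinearMap.sum_apply, ContinuousLinearMap.comp_apply,
    ContinuousLinearMap.prod_apply, ContinuousLinearMap.id_apply,
    ContinuousLinearMap.coe_fst', ContinuousLinearMap.coe_snd',
    ContinuousLinearMap.smul_apply, dotCLM_apply, mulVecCLM_apply, mvCLM_apply,
    entryCLM_apply, smul_eq_mul, add_dotProduct, smul_dotProduct,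
    Matrix.mulVecLin_apply]
  rw [sum_dot, sum_dot, sum_dot, Finset.mul_sum, ← Finset.sum_add_distrib,
    Finset.sum_congr rfl fun i _ => hper i]
  simp only [Finset.sum_add_distrib]
  ring
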